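/- Let G be the abelian subgroup of GL(5,ℂ) generated by the three matrices A, B, C that equal the 5×5 identity matrix except for one entry in the last row: A has entry 1 in position (5,1), B has entry 1 in position (5,2), and C has entry 1 in position (5,3). For z = (1+i, √3 + i√2, √2 + i, z_4, z_5) with z_4, z_5 ∈ ℂ, the orbit G(z) = {(1+i, √3+i√2, √2+i, z_4, n(1+i) + m(√3+i√2) + p(√2+i) + z_5) : n, m, p ∈ ℤ} is dense in the complex straight line {(1+i, √3+i√2, √2+i, z_4, w) : w ∈ ℂ}; that is, closure(G(z)) = {(1+i, √3+i√2, √2+i, z_4, w) : w ∈ ℂ}. -/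

import Mathlib

set_option linter.unreachableTactic false
set_option linter.unusedTactic false
set_option linter.unnecessarySeqFocus false
set_option maxHeartbeats 1000000

open Matrix
/-- `A ∈ GL(5, ℂ)`: the identity except the entry in position `(5,1)` equals `1`. -/
noncomputable def Aex : Matrix.GeneralLinearGroup (Fin 5) ℂ :=
  Matrix.GeneralLinearGroup.mkOfDetNeZero
    !![1,0,0,0,0;0,1,0,0,0;0,0,1,0,0;0,0,0,1,0;1,0,0,0,1]
    (by simp [Matrix.det_succ_row_zero, Fin.sum_univ_succ])

/-- `B ∈ GL(5, ℂ)`: the identity except the entry in position `(5,2)` equals `1`. -/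
noncomputable def Bex : Matrix.GeneralLinearGroup (Fin 5) ℂ :=
  Matrix.GeneralLinearGroup.mkOfDetNeZero
    !![1,0,0,0,0;0,1,0,0,0;0,0,1,0,0;0,0,0,1,0;0,1,0,0,1]
    (by simp [Matrix.det_succ_row_zero, Fin.sum_univ_succ])

/-- `C ∈ GL(5, ℂ)`: the identity except the entry in position `(5,3)` equals `1`. -/
noncomputable def Cex : Matrix.GeneralLinearGroup (Fin 5) ℂ :=
  Matrix.GeneralLinearGroup.mkOfDetNeZero
    !![1,0,0,0,0;0,1,0,0,0;0,0,1,0,0;0,0,0,1,0;0,0,1,0,1]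
    (by simp [Matrix.det_succ_row_zero, Fin.sum_univ_succ])

/-- The subgroup of `GL(5, ℂ)` generated by `A`, `B` and `C`. -/
noncomputable def Gex : Subgroup (Matrix.GeneralLinearGroup (Fin 5) ℂ) :=
  Subgroup.closure {Aex, Bex, Cex}

noncomputable def Ematrix (n m p : ℤ) : Matrix (Fin 5) (Fin 5) ℂ :=
  !![1,0,0,0,0; 0,1,0,0,0; 0,0,1,0,0; 0,0,0,1,0; (n:ℂ),(m:ℂ),(p:ℂ),0,1]

lemma Emul (n m p n' m' p' : ℤ) :
    Ematrix n m p * Ematrix n' m' p' = Ematrix (n+n') (m+m') (p+p') := by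
  ext i j
  fin_cases i <;> fin_cases j <;>
    simp [Ematrix, Matrix.mul_apply, Fin.sum_univ_five, Matrix.vecHead, Matrix.vecTail]

lemma E0 : Ematrix 0 0 0 = 1 := by
  ext i j
  fin_cases i <;> fin_cases j <;>
    simp [Ematrix, Matrix.one_apply, Matrix.vecHead, Matrix.vecTail]

noncomputable def gE (n m p : ℤ) : Matrix.GeneralLinearGroup (Fin 5) ℂ :=
  ⟨Ematrix n m p, Ematrix (-n) (-m) (-p),
   by rw [Emul]; simp [E0], by rw [Emul]; simp [E0]⟩

lemma gE_mul (n m p n' m' p' : ℤ) : gE n m p * gE n' m' p' = gE (n+n') (m+m') (p+p') :=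
  Units.ext (Emul n m p n' m' p')

lemma gE_one : gE 0 0 0 = 1 := Units.ext E0

lemma gE_inv (n m p : ℤ) : (gE n m p)⁻¹ = gE (-n) (-m) (-p) := by
  apply inv_eq_of_mul_eq_one_right
  rw [gE_mul]; simp [gE_one]

lemma Aex_eq : Aex = gE 1 0 0 := by
  ext i j
  fin_cases i <;> fin_cases j <;>
    simp [Aex, gE, Ematrix, Matrix.GeneralLinearGroup.mkOfDetNeZero,
      Matrix.GeneralLinearGroup.mk', Matrix.unitOfDetInvertible,
      Matrix.vecHead, Matrix.vecTail]

lemma Bex_eq : Bex = gE 0 1 0 := by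
  ext i j
  fin_cases i <;> fin_cases j <;>
    simp [Bex, gE, Ematrix, Matrix.GeneralLinearGroup.mkOfDetNeZero,
      Matrix.GeneralLinearGroup.mk', Matrix.unitOfDetInvertible,
      Matrix.vecHead, Matrix.vecTail]

lemma Cex_eq : Cex = gE 0 0 1 := by
  ext i j
  fin_cases i <;> fin_cases j <;>
    simp [Cex, gE, Ematrix, Matrix.GeneralLinearGroup.mkOfDetNeZero,
      Matrix.GeneralLinearGroup.mk', Matrix.unitOfDetInvertible,
      Matrix.vecHead, Matrix.vecTail]

lemma gE_mem (n m p : ℤ) : gE n m p ∈ Gex := by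
  have hA : Aex ∈ Gex := Subgroup.subset_closure (by simp)
  have hB : Bex ∈ Gex := Subgroup.subset_closure (by simp)
  have hC : Cex ∈ Gex := Subgroup.subset_closure (by simp)
  have h1 : ∀ n : ℤ, gE n 0 0 ∈ Gex := by
    intro n
    induction n using Int.induction_on with
    | zero => rw [gE_one]; exact one_mem _
    | succ k ih =>
        have e : gE ((k:ℤ)+1) 0 0 = gE k 0 0 * gE 1 0 0 := by rw [gE_mul]; congr 1 <;> omega
        rw [e, ← Aex_eq]; exact mul_mem ih hA
    | pred k ih =>
        have e : gE (-(k:ℤ)-1) 0 0 = gE (-k) 0 0 * (gE 1 0 0)⁻¹ := by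
          rw [gE_inv, gE_mul]; congr 1 <;> omega
        rw [e, ← Aex_eq]; exact mul_mem ih (inv_mem hA)
  have h2 : ∀ m : ℤ, gE 0 m 0 ∈ Gex := by
    intro m
    induction m using Int.induction_on with
    | zero => rw [gE_one]; exact one_mem _
    | succ k ih =>
        have e : gE 0 ((k:ℤ)+1) 0 = gE 0 k 0 * gE 0 1 0 := by rw [gE_mul]; congr 1 <;> omega
        rw [e, ← Bex_eq]; exact mul_mem ih hB
    | pred k ih =>
        have e : gE 0 (-(k:ℤ)-1) 0 = gE 0 (-k) 0 * (gE 0 1 0)⁻¹ := by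
          rw [gE_inv, gE_mul]; congr 1 <;> omega
        rw [e, ← Bex_eq]; exact mul_mem ih (inv_mem hB)
  have h3 : ∀ p : ℤ, gE 0 0 p ∈ Gex := by
    intro p
    induction p using Int.induction_on with
    | zero => rw [gE_one]; exact one_mem _
    | succ k ih =>
        have e : gE 0 0 ((k:ℤ)+1) = gE 0 0 k * gE 0 0 1 := by rw [gE_mul]; congr 1 <;> omega
        rw [e, ← Cex_eq]; exact mul_mem ih hC
    | pred k ih =>
        have e : gE 0 0 (-(k:ℤ)-1) = gE 0 0 (-k) * (gE 0 0 1)⁻¹ := by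
          rw [gE_inv, gE_mul]; congr 1 <;> omega
        rw [e, ← Cex_eq]; exact mul_mem ih (inv_mem hC)
  have : gE n m p = gE n 0 0 * gE 0 m 0 * gE 0 0 p := by
    rw [gE_mul, gE_mul]; norm_num
  rw [this]
  exact mul_mem (mul_mem (h1 n) (h2 m)) (h3 p)

lemma mem_Gex_iff {M : Matrix.GeneralLinearGroup (Fin 5) ℂ} :
    M ∈ Gex ↔ ∃ n m p : ℤ, M = gE n m p := by
  constructor
  · intro hM
    induction hM using Subgroup.closure_induction with
    | mem x hx =>
        rcases hx with h | h | h
        · exact ⟨1, 0, 0, by rw [h, Aex_eq]⟩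
        · exact ⟨0, 1, 0, by rw [h, Bex_eq]⟩
        · exact ⟨0, 0, 1, by rw [h, Cex_eq]⟩
    | one => exact ⟨0, 0, 0, gE_one.symm⟩
    | mul x y _ _ hx hy =>
        obtain ⟨n, m, p, rfl⟩ := hx
        obtain ⟨n', m', p', rfl⟩ := hy
        exact ⟨n+n', m+m', p+p', gE_mul _ _ _ _ _ _⟩
    | inv x _ hx =>
        obtain ⟨n, m, p, rfl⟩ := hx
        exact ⟨-n, -m, -p, gE_inv n m p⟩
  · rintro ⟨n, m, p, rfl⟩
    exact gE_mem n m p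

lemma gE_mulVec (n m p : ℤ) (a b c d e : ℂ) :
    ((gE n m p : Matrix.GeneralLinearGroup (Fin 5) ℂ) : Matrix (Fin 5) (Fin 5) ℂ).mulVec
      ![a, b, c, d, e] = ![a, b, c, d, (n:ℂ)*a + (m:ℂ)*b + (p:ℂ)*c + e] := by
  funext i
  fin_cases i <;>
    simp [gE, Ematrix, Matrix.mulVec, dotProduct, Fin.sum_univ_five,
      Matrix.vecHead, Matrix.vecTail]

noncomputable section

open Complex

/-- The three generators as complex numbers. -/
def uu : ℂ := 1 + Complex.I
def vv : ℂ := (Real.sqrt 3 : ℂ) + Complex.I * (Real.sqrt 2 : ℂ)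
def ww : ℂ := (Real.sqrt 2 : ℂ) + Complex.I

@[simp] lemma uu_re : uu.re = 1 := by simp [uu]
@[simp] lemma uu_im : uu.im = 1 := by simp [uu]
@[simp] lemma vv_re : vv.re = Real.sqrt 3 := by simp [vv]
@[simp] lemma vv_im : vv.im = Real.sqrt 2 := by simp [vv]
@[simp] lemma ww_re : ww.re = Real.sqrt 2 := by simp [ww]
@[simp] lemma ww_im : ww.im = 1 := by simp [ww]

/-- The subgroup ℤuu + ℤvv + ℤww of ℂ. -/
def Gam : AddSubgroup ℂ where
  carrier := {z | ∃ n m p : ℤ, z = (n:ℂ) * uu + (m:ℂ) * vv + (p:ℂ) * ww}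
  zero_mem' := ⟨0, 0, 0, by push_cast; ring⟩
  add_mem' := by
    rintro a b ⟨n, m, p, rfl⟩ ⟨n', m', p', rfl⟩
    exact ⟨n+n', m+m', p+p', by push_cast; ring⟩
  neg_mem' := by
    rintro a ⟨n, m, p, rfl⟩
    exact ⟨-n, -m, -p, by push_cast; ring⟩

lemma uu_mem : uu ∈ Gam := ⟨1, 0, 0, by push_cast; ring⟩
lemma vv_mem : vv ∈ Gam := ⟨0, 1, 0, by push_cast; ring⟩
lemma ww_mem : ww ∈ Gam := ⟨0, 0, 1, by push_cast; ring⟩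

/-- determinant functional -/
def Dd (g h : ℂ) : ℝ := g.re * h.im - g.im * h.re

lemma cramer (g h t : ℂ) : (Dd g h) • t = (Dd t h) • g + (Dd g t) • h := by
  apply Complex.ext <;>
    simp [Dd, Complex.real_smul, Complex.mul_re, Complex.mul_im] <;> ring

lemma Dd_add_right (g a b : ℂ) : Dd g (a + b) = Dd g a + Dd g b := by
  simp [Dd]; ring

lemma Dd_sub_right (g a b : ℂ) : Dd g (a - b) = Dd g a - Dd g b := by
  simp [Dd]; ring

lemma Dd_smul_right (g : ℂ) (r : ℝ) (a : ℂ) : Dd g (r • a) = r * Dd g a := by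
  simp [Dd, Complex.real_smul, Complex.mul_re, Complex.mul_im]; ring

lemma Dd_neg_right (g a : ℂ) : Dd g (-a) = - Dd g a := by
  simp [Dd]; ring

lemma Dd_swap (g h : ℂ) : Dd g h = - Dd h g := by simp [Dd]; ring

lemma dep {g h : ℂ} (hD : Dd g h = 0) (hg : g ≠ 0) : ∃ c : ℝ, h = c • g := by
  unfold Dd at hD
  have nz : g.re ^ 2 + g.im ^ 2 ≠ 0 := by
    have := Complex.normSq_pos.mpr hg
    rw [Complex.normSq_apply] at this
    nlinarith
  refine ⟨(g.re * h.re + g.im * h.im) / (g.re ^ 2 + g.im ^ 2), ?_⟩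
  refine Complex.ext ?_ ?_
  · simp only [Complex.real_smul, Complex.mul_re, Complex.ofReal_re, Complex.ofReal_im]
    field_simp
    linear_combination (-g.im) * hD
  · simp only [Complex.real_smul, Complex.mul_im, Complex.ofReal_re, Complex.ofReal_im]
    field_simp
    linear_combination g.re * hD

lemma int_mul_irrat {x : ℝ} (hx : Irrational x) {d e : ℤ} (hd : d ≠ 0)
    (h : (d:ℝ) * x = e) : False := by
  apply hx
  refine ⟨(e : ℚ) / (d : ℚ), ?_⟩
  have hd' : (d:ℝ) ≠ 0 := Int.cast_ne_zero.mpr hd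
  push_cast
  field_simp
  linarith [h]

lemma sq_six {X Y : ℤ} (h : X ^ 2 = 6 * Y ^ 2) : X = 0 ∧ Y = 0 := by
  by_cases hY : Y = 0
  · subst hY
    constructor
    · have hx2 : X ^ 2 = 0 := by rw [h]; ring
      exact pow_eq_zero_iff (by norm_num) |>.mp hx2
    · rfl
  · exfalso
    have h6 : Irrational (Real.sqrt 6) := by
      apply irrational_nrt_of_notint_nrt 2 6
      · rw [sq, Real.mul_self_sqrt] <;> norm_num
      · rintro ⟨y, hy⟩
        have h1 : (y:ℝ) ^ 2 = 6 := by
          rw [← hy, sq, Real.mul_self_sqrt] <;> norm_num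
        have h2 : y ^ 2 = 6 := by exact_mod_cast h1
        have hb1 : y ≤ 2 := by nlinarith
        have hb2 : -2 ≤ y := by nlinarith
        interval_cases y <;> omega
      · norm_num
    have hX : ((X:ℝ)) ^ 2 = 6 * ((Y:ℝ)) ^ 2 := by exact_mod_cast congrArg (fun t : ℤ => (t:ℝ)) h
    have habs : |(X:ℝ)| = Real.sqrt 6 * |(Y:ℝ)| := by
      rw [← Real.sqrt_sq_eq_abs, ← Real.sqrt_sq_eq_abs (x := (Y:ℝ)), ← Real.sqrt_mul (by norm_num)]
      rw [hX]
    apply int_mul_irrat h6 (d := |Y|) (e := |X|) (by simpa using hY)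
    push_cast
    linarith [habs]

lemma s2_sq : Real.sqrt 2 ^ 2 = 2 := Real.sq_sqrt (by norm_num)
lemma s3_sq : Real.sqrt 3 ^ 2 = 3 := Real.sq_sqrt (by norm_num)
lemma s2s3 : Real.sqrt 2 * Real.sqrt 3 = Real.sqrt 6 := by
  rw [← Real.sqrt_mul (by norm_num : (0:ℝ) ≤ 2)]
  norm_num

lemma irr3 : Irrational (Real.sqrt 3) := (Nat.prime_three).irrational_sqrt

lemma sqrt236 {A B C E : ℤ} (h : (A:ℝ) * Real.sqrt 2 + (B:ℝ) * Real.sqrt 3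
    + (C:ℝ) * Real.sqrt 6 = (E:ℝ)) : A = 0 ∧ B = 0 ∧ C = 0 := by
  set s2 := Real.sqrt 2
  set s3 := Real.sqrt 3
  have h2 := s2_sq
  have h3 := s3_sq
  have h23 : s2 * s3 = Real.sqrt 6 := s2s3
  rw [← h23] at h
  -- first squaring : (E - A s2)^2 = ((B + C s2) * s3)^2
  have heq1 : ((E:ℝ) - A * s2) ^ 2 = (((B:ℝ) + C * s2) * s3) ^ 2 := by
    have : (E:ℝ) - A * s2 = ((B:ℝ) + C * s2) * s3 := by linear_combination -h
    rw [this]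
  have key1 : ((6*B*C + 2*E*A : ℤ) : ℝ) * s2 = ((E^2 + 2*A^2 - 3*B^2 - 6*C^2 : ℤ) : ℝ) := by
    push_cast
    linear_combination (-1 : ℝ) * heq1 + (A^2 - 3*C^2) * h2 - ((B:ℝ) + C*s2)^2 * h3
  have hd1 : (6*B*C + 2*E*A : ℤ) = 0 := by
    by_contra hne
    exact int_mul_irrat irrational_sqrt_two hne key1
  have he1 : (E^2 + 2*A^2 - 3*B^2 - 6*C^2 : ℤ) = 0 := by
    have : ((E^2 + 2*A^2 - 3*B^2 - 6*C^2 : ℤ) : ℝ) = 0 := by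
      rw [← key1, hd1]; push_cast; ring
    exact_mod_cast this
  -- second squaring : (E - B s3)^2 = ((A + C s3) * s2)^2
  have heq2 : ((E:ℝ) - B * s3) ^ 2 = (((A:ℝ) + C * s3) * s2) ^ 2 := by
    have : (E:ℝ) - B * s3 = ((A:ℝ) + C * s3) * s2 := by linear_combination -h
    rw [this]
  have key2 : ((4*A*C + 2*E*B : ℤ) : ℝ) * s3 = ((E^2 + 3*B^2 - 2*A^2 - 6*C^2 : ℤ) : ℝ) := by
    push_cast
    linear_combination (-1 : ℝ) * heq2 + (B^2 - 2*C^2) * h3 - ((A:ℝ) + C*s3)^2 * h2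
  have hd2 : (4*A*C + 2*E*B : ℤ) = 0 := by
    by_contra hne
    exact int_mul_irrat irr3 hne key2
  have he2 : (E^2 + 3*B^2 - 2*A^2 - 6*C^2 : ℤ) = 0 := by
    have : ((E^2 + 3*B^2 - 2*A^2 - 6*C^2 : ℤ) : ℝ) = 0 := by
      rw [← key2, hd2]; push_cast; ring
    exact_mod_cast this
  -- now 4A² = 6B², i.e. (2A)² = 6B²
  have hab : (2*A) ^ 2 = 6 * B ^ 2 := by linear_combination he1 - he2
  obtain ⟨hA2, hB⟩ := sq_six hab
  have hA : A = 0 := by omega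
  have hC : C = 0 ∧ E = 0 := by
    have hec : E ^ 2 = 6 * C ^ 2 := by
      have := he1
      subst hA hB
      linarith [this]
    obtain ⟨hE, hC⟩ := sq_six hec
    exact ⟨hC, hE⟩
  exact ⟨hA, hB, hC.1⟩

lemma key_alg {l μ : ℝ} {k1 k2 k3 : ℤ}
    (h1 : l + μ = (k1:ℝ))
    (h2 : l * Real.sqrt 3 + μ * Real.sqrt 2 = (k2:ℝ))
    (h3 : l * Real.sqrt 2 + μ = (k3:ℝ)) : l = 0 ∧ μ = 0 := by
  set s2 := Real.sqrt 2
  set s3 := Real.sqrt 3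
  have hs2 := s2_sq
  set d : ℤ := k1 - k3 with hd
  have hld : l * (1 - s2) = (d:ℝ) := by push_cast [hd]; linarith
  have hl : l = -(d:ℝ) * (1 + s2) := by
    linear_combination (-(1:ℝ) - s2) * hld + (-l) * hs2
  have hμ : μ = (k1:ℝ) + d + d * s2 := by
    rw [← h1, hl]; push_cast; ring
  -- plug into h2
  have hmain : ((k1 + d : ℤ):ℝ) * s2 + ((-d : ℤ):ℝ) * s3 + ((-d : ℤ):ℝ) * Real.sqrt 6
      = ((k2 - 2*d : ℤ):ℝ) := by
    rw [← s2s3]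
    push_cast
    linear_combination h2 - hl * s3 - hμ * s2 - (d:ℝ) * hs2
  obtain ⟨hA, hB, _⟩ := sqrt236 hmain
  have hd0 : d = 0 := by omega
  have hk1 : k1 = 0 := by omega
  constructor
  · rw [hl, hd0]; push_cast; ring
  · rw [hμ, hd0, hk1]; push_cast; ring

lemma pigeon (α β : ℝ) (u w v : ℂ) (hv : v = α • u + β • w) (ε : ℝ) (hε : 0 < ε)
    (himg : ∀ d r s : ℤ, d ≠ 0 → (d:ℂ) * v - r * u - s * w ≠ 0) :
    ∃ d r s : ℤ, ((d:ℂ) * v - r * u - s * w ≠ 0) ∧ ‖(d:ℂ) * v - r * u - s * w‖ < ε := by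
  obtain ⟨K0, hK0⟩ := exists_nat_gt ((‖u‖ + ‖w‖ + 1) / ε)
  set K : ℕ := K0 + 1 with hK
  have hKpos : (0:ℝ) < K := by positivity
  have hKbig : (‖u‖ + ‖w‖ + 1) / ε < K := by
    refine lt_of_lt_of_le hK0 ?_
    exact_mod_cast Nat.le_succ K0
  -- pigeonhole
  set f : ℕ → ℤ × ℤ := fun j =>
    (⌊(K:ℝ) * Int.fract (j * α)⌋, ⌊(K:ℝ) * Int.fract (j * β)⌋) with hf
  have hmaps : ∀ j ∈ Finset.range (K*K+1), f j ∈ Finset.Icc (0:ℤ) (K-1) ×ˢ Finset.Icc (0:ℤ) (K-1) := by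
    intro j _
    simp only [Finset.mem_product, Finset.mem_Icc]
    constructor <;> constructor
    · exact Int.floor_nonneg.mpr (mul_nonneg (by positivity) (Int.fract_nonneg _))
    · have h1 : (K:ℝ) * Int.fract ((j:ℝ) * α) < ((K:ℤ):ℝ) := by
        push_cast
        nlinarith [Int.fract_lt_one ((j:ℝ) * α), Int.fract_nonneg ((j:ℝ) * α)]
      have := Int.floor_lt.mpr h1
      show ⌊(K:ℝ) * Int.fract ((j:ℝ) * α)⌋ ≤ _
      omega
    · exact Int.floor_nonneg.mpr (mul_nonneg (by positivity) (Int.fract_nonneg _))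
    · have h1 : (K:ℝ) * Int.fract ((j:ℝ) * β) < ((K:ℤ):ℝ) := by
        push_cast
        nlinarith [Int.fract_lt_one ((j:ℝ) * β), Int.fract_nonneg ((j:ℝ) * β)]
      have := Int.floor_lt.mpr h1
      show ⌊(K:ℝ) * Int.fract ((j:ℝ) * β)⌋ ≤ _
      omega
  have hcard : ((Finset.Icc (0:ℤ) (K-1)) ×ˢ (Finset.Icc (0:ℤ) (K-1))).card
      < (Finset.range (K*K+1)).card := by
    rw [Finset.card_product, Finset.card_range, Int.card_Icc]
    have : ((K:ℤ) - 1 + 1 - 0).toNat = K := by omega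
    rw [this]
    omega
  obtain ⟨j, hj, j', hj', hne, hfeq⟩ :=
    Finset.exists_ne_map_eq_of_card_lt_of_maps_to hcard hmaps
  have hfeq1 : ⌊(K:ℝ) * Int.fract ((j:ℝ) * α)⌋ = ⌊(K:ℝ) * Int.fract ((j':ℝ) * α)⌋ :=
    congrArg Prod.fst hfeq
  have hfeq2 : ⌊(K:ℝ) * Int.fract ((j:ℝ) * β)⌋ = ⌊(K:ℝ) * Int.fract ((j':ℝ) * β)⌋ :=
    congrArg Prod.snd hfeq
  have habs1 : |(K:ℝ) * Int.fract ((j:ℝ) * α) - (K:ℝ) * Int.fract ((j':ℝ) * α)| < 1 :=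
    Int.abs_sub_lt_one_of_floor_eq_floor hfeq1
  have habs2 : |(K:ℝ) * Int.fract ((j:ℝ) * β) - (K:ℝ) * Int.fract ((j':ℝ) * β)| < 1 :=
    Int.abs_sub_lt_one_of_floor_eq_floor hfeq2
  set Δa : ℝ := Int.fract ((j:ℝ) * α) - Int.fract ((j':ℝ) * α) with hΔa
  set Δb : ℝ := Int.fract ((j:ℝ) * β) - Int.fract ((j':ℝ) * β) with hΔb
  have hu1 : |Δa| < 1 / K := by
    rw [lt_div_iff₀ hKpos]
    calc |Δa| * K = |(K:ℝ) * Δa| := by rw [abs_mul, abs_of_pos hKpos]; ring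
    _ < 1 := by simpa [hΔa, mul_sub] using habs1
  have hu2 : |Δb| < 1 / K := by
    rw [lt_div_iff₀ hKpos]
    calc |Δb| * K = |(K:ℝ) * Δb| := by rw [abs_mul, abs_of_pos hKpos]; ring
    _ < 1 := by simpa [hΔb, mul_sub] using habs2
  have hdne : (j:ℤ) - (j':ℤ) ≠ 0 := sub_ne_zero.mpr (by exact_mod_cast hne)
  refine ⟨(j:ℤ) - j', ⌊(j:ℝ) * α⌋ - ⌊(j':ℝ) * α⌋, ⌊(j:ℝ) * β⌋ - ⌊(j':ℝ) * β⌋,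
    himg _ _ _ hdne, ?_⟩
  have geq : ((((j:ℤ) - j' : ℤ)):ℂ) * v - ((⌊(j:ℝ) * α⌋ - ⌊(j':ℝ) * α⌋ : ℤ):ℂ) * u
      - ((⌊(j:ℝ) * β⌋ - ⌊(j':ℝ) * β⌋ : ℤ):ℂ) * w = Δa • u + Δb • w := by
    rw [hv, hΔa, hΔb]
    simp only [Complex.real_smul, Int.fract]
    push_cast
    ring
  rw [geq]
  have hn : ‖Δa • u + Δb • w‖ ≤ |Δa| * ‖u‖ + |Δb| * ‖w‖ := by
    refine (norm_add_le _ _).trans ?_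
    rw [norm_smul, norm_smul, Real.norm_eq_abs, Real.norm_eq_abs]
  have hfin : (1/K) * ‖u‖ + (1/K) * ‖w‖ < ε := by
    rw [div_lt_iff₀ hε] at hKbig
    have hKne : (K:ℝ) ≠ 0 := ne_of_gt hKpos
    rw [show (1/(K:ℝ)) * ‖u‖ + (1/K) * ‖w‖ = (‖u‖ + ‖w‖)/K by field_simp]
    rw [div_lt_iff₀ hKpos]
    nlinarith
  have h1 : |Δa| * ‖u‖ ≤ (1/K) * ‖u‖ :=
    mul_le_mul_of_nonneg_right hu1.le (norm_nonneg u)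
  have h2 : |Δb| * ‖w‖ ≤ (1/K) * ‖w‖ :=
    mul_le_mul_of_nonneg_right hu2.le (norm_nonneg w)
  linarith


lemma Duw : Dd uu ww = 1 - Real.sqrt 2 := by simp [Dd]

lemma Duw_ne : Dd uu ww ≠ 0 := by
  rw [Duw]
  intro h
  have h2 := s2_sq
  nlinarith

lemma himg_gam : ∀ d r s : ℤ, d ≠ 0 → (d:ℂ) * vv - (r:ℂ) * uu - (s:ℂ) * ww ≠ 0 := by
  intro d r s hd h0
  have him := congrArg Complex.im h0
  simp only [Complex.sub_im, Complex.mul_im, Complex.intCast_re, Complex.intCast_im,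
    Complex.zero_im, uu_re, uu_im, vv_re, vv_im, ww_re, ww_im] at him
  have : (d:ℝ) * Real.sqrt 2 = ((r + s : ℤ) : ℝ) := by push_cast; linarith
  exact int_mul_irrat irrational_sqrt_two hd this

lemma small_nonzero {ε : ℝ} (hε : 0 < ε) : ∃ g ∈ Gam, g ≠ 0 ∧ ‖g‖ < ε := by
  have h := cramer uu ww vv
  have hvv : vv = ((Dd uu ww)⁻¹ * Dd vv ww) • uu + ((Dd uu ww)⁻¹ * Dd uu vv) • ww := by
    rw [mul_smul, mul_smul, ← smul_add, ← h, smul_smul, inv_mul_cancel₀ Duw_ne, one_smul]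
  obtain ⟨d, r, s, hne0, hnorm⟩ :=
    pigeon ((Dd uu ww)⁻¹ * Dd vv ww) ((Dd uu ww)⁻¹ * Dd uu vv) uu ww vv hvv ε hε himg_gam
  exact ⟨(d:ℂ) * vv - (r:ℂ) * uu - (s:ℂ) * ww,
    ⟨-r, d, -s, by push_cast; ring⟩, hne0, hnorm⟩

theorem gamma_dense (t : ℂ) {ε : ℝ} (hε : 0 < ε) : ∃ γ ∈ Gam, ‖γ - t‖ < ε := by
  by_cases hcase : ∀ δ : ℝ, 0 < δ →
      ∃ g ∈ Gam, ∃ h ∈ Gam, ‖g‖ < δ ∧ ‖h‖ < δ ∧ Dd g h ≠ 0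
  · -- two independent small vectors: lattice approximation
    obtain ⟨g, hgm, h, hhm, hgs, hhs, hD⟩ := hcase (ε/2) (by positivity)
    have hsr : t = ((Dd g h)⁻¹ * Dd t h) • g + ((Dd g h)⁻¹ * Dd g t) • h := by
      rw [mul_smul, mul_smul, ← smul_add, ← cramer, smul_smul, inv_mul_cancel₀ hD, one_smul]
    set s : ℝ := (Dd g h)⁻¹ * Dd t h with hs
    set r : ℝ := (Dd g h)⁻¹ * Dd g t with hr
    refine ⟨⌊s⌋ • g + ⌊r⌋ • h, AddSubgroup.add_mem _ (AddSubgroup.zsmul_mem _ hgm _)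
      (AddSubgroup.zsmul_mem _ hhm _), ?_⟩
    have hdiff : ⌊s⌋ • g + ⌊r⌋ • h - t = (((⌊s⌋:ℝ)) - s) • g + (((⌊r⌋:ℝ)) - r) • h := by
      rw [hsr]
      push_cast [sub_smul]
      rw [Int.cast_smul_eq_zsmul, Int.cast_smul_eq_zsmul]
      abel
    rw [hdiff]
    have h1 : ‖(((⌊s⌋:ℝ)) - s) • g‖ ≤ ‖g‖ := by
      rw [norm_smul, Real.norm_eq_abs]
      have : |(⌊s⌋:ℝ) - s| ≤ 1 := by
        rw [abs_sub_comm, _root_.abs_of_nonneg (by linarith [Int.floor_le s])]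
        linarith [Int.lt_floor_add_one s]
      nlinarith [norm_nonneg g, abs_nonneg ((⌊s⌋:ℝ) - s)]
    have h2 : ‖(((⌊r⌋:ℝ)) - r) • h‖ ≤ ‖h‖ := by
      rw [norm_smul, Real.norm_eq_abs]
      have : |(⌊r⌋:ℝ) - r| ≤ 1 := by
        rw [abs_sub_comm, _root_.abs_of_nonneg (by linarith [Int.floor_le r])]
        linarith [Int.lt_floor_add_one r]
      nlinarith [norm_nonneg h, abs_nonneg ((⌊r⌋:ℝ) - r)]
    calc ‖(((⌊s⌋:ℝ)) - s) • g + (((⌊r⌋:ℝ)) - r) • h‖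
        ≤ ‖(((⌊s⌋:ℝ)) - s) • g‖ + ‖(((⌊r⌋:ℝ)) - r) • h‖ := norm_add_le _ _
      _ ≤ ‖g‖ + ‖h‖ := add_le_add h1 h2
      _ < ε/2 + ε/2 := add_lt_add hgs hhs
      _ = ε := by ring
  · -- all small vectors collinear
    push_neg at hcase
    obtain ⟨δ₀, hδ₀, hcol⟩ := hcase
    obtain ⟨g₀, hg₀m, hg₀ne, hg₀s⟩ := small_nonzero hδ₀
    have hg₀n : 0 < ‖g₀‖ := norm_pos_iff.mpr hg₀ne
    -- the subgroup of real multiples of g₀ landing in Gam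
    set R : AddSubgroup ℝ :=
      { carrier := {c : ℝ | c • g₀ ∈ Gam}
        zero_mem' := by simp [AddSubgroup.zero_mem]
        add_mem' := by
          intro a b ha hb
          simp only [Set.mem_setOf_eq, add_smul] at *
          exact AddSubgroup.add_mem _ ha hb
        neg_mem' := by
          intro a ha
          simp only [Set.mem_setOf_eq, neg_smul] at *
          exact AddSubgroup.neg_mem _ ha } with hR
    have hRmem : ∀ c : ℝ, c ∈ R ↔ c • g₀ ∈ Gam := fun c => Iff.rfl
    have hRsmall : ∀ δ : ℝ, 0 < δ → ∃ c ∈ R, c ∈ Set.Ioo 0 δ := by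
      intro δ hδ
      obtain ⟨h, hhm, hhne, hhs⟩ := small_nonzero (lt_min hδ₀ (mul_pos hδ hg₀n))
      have hDgh : Dd g₀ h = 0 :=
        hcol g₀ hg₀m h hhm hg₀s (hhs.trans_le (min_le_left _ _))
      obtain ⟨c, rfl⟩ := dep hDgh hg₀ne
      have hcne : c ≠ 0 := by
        rintro rfl
        simp at hhne
      have hcabs : |c| < δ := by
        have he : ‖c • g₀‖ = |c| * ‖g₀‖ := by rw [norm_smul, Real.norm_eq_abs]
        have h2 : |c| * ‖g₀‖ < δ * ‖g₀‖ := by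
          rw [← he]
          exact hhs.trans_le (min_le_right _ _)
        exact (mul_lt_mul_iff_left₀ hg₀n).mp h2
      rcases lt_or_gt_of_ne hcne with hneg | hpos
      · exact ⟨-c, R.neg_mem (by exact hhm), by
          constructor
          · linarith
          · rw [abs_of_neg hneg] at hcabs; linarith⟩
      · exact ⟨c, by exact hhm, by
          constructor
          · exact hpos
          · rw [abs_of_pos hpos] at hcabs; linarith⟩
    have hRdense : Dense (R : Set ℝ) := R.dense_of_not_isolated_zero hRsmall
    have approxR : ∀ (c δ : ℝ), 0 < δ → ∃ c' ∈ R, |c - c'| < δ := by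
      intro c δ hδ
      obtain ⟨c', hc'R, hc'⟩ := Metric.mem_closure_iff.mp (hRdense c) δ hδ
      exact ⟨c', hc'R, by rwa [Real.dist_eq] at hc'⟩
    -- the image subgroup under Dd g₀
    set F : AddSubgroup ℝ :=
      { carrier := {x : ℝ | ∃ γ ∈ Gam, Dd g₀ γ = x}
        zero_mem' := ⟨0, AddSubgroup.zero_mem _, by simp [Dd]⟩
        add_mem' := by
          rintro x y ⟨γ, hγ, rfl⟩ ⟨γ', hγ', rfl⟩
          exact ⟨γ + γ', AddSubgroup.add_mem _ hγ hγ', Dd_add_right g₀ γ γ'⟩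
        neg_mem' := by
          rintro x ⟨γ, hγ, rfl⟩
          exact ⟨-γ, AddSubgroup.neg_mem _ hγ, Dd_neg_right g₀ γ⟩ } with hF
    rcases AddSubgroup.dense_or_cyclic F with hFd | ⟨a, hFa⟩
    · -- F dense : approximate
      set h₀ : ℂ := (Complex.normSq g₀)⁻¹ • (Complex.I * g₀) with hh₀
      have hnsne : Complex.normSq g₀ ≠ 0 := (Complex.normSq_pos.mpr hg₀ne).ne'
      have hDh₀ : Dd g₀ h₀ = 1 := by
        rw [hh₀, Dd_smul_right]
        have : Dd g₀ (Complex.I * g₀) = Complex.normSq g₀ := by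
          simp [Dd, Complex.mul_re, Complex.mul_im, Complex.normSq_apply]
          try ring
        rw [this, inv_mul_cancel₀ hnsne]
      have hδ₁ : (0:ℝ) < ε/(2*(‖h₀‖+1)) := by positivity
      have hδ₂ : (0:ℝ) < ε/(2*(‖g₀‖+1)) := by positivity
      obtain ⟨y, hyF, hy⟩ := Metric.mem_closure_iff.mp (hFd (Dd g₀ t)) _ hδ₁
      obtain ⟨γ, hγm, rfl⟩ := hyF
      rw [Real.dist_eq] at hy
      set ℓ : ℂ := t - γ - (Dd g₀ t - Dd g₀ γ) • h₀ with hℓ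
      have hDl : Dd g₀ ℓ = 0 := by
        rw [hℓ, Dd_sub_right, Dd_sub_right, Dd_smul_right, hDh₀]
        ring
      obtain ⟨c, hc⟩ := dep hDl hg₀ne
      obtain ⟨c', hc'R, hcc'⟩ := approxR c _ hδ₂
      refine ⟨γ + c' • g₀, AddSubgroup.add_mem _ hγm ((hRmem c').mp hc'R), ?_⟩
      have hrw : γ + c' • g₀ - t = (c' - c) • g₀ - (Dd g₀ t - Dd g₀ γ) • h₀ := by
        have ht2 : t = γ + c • g₀ + (Dd g₀ t - Dd g₀ γ) • h₀ := by
          rw [← hc, hℓ]; abel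
        nth_rewrite 1 [ht2]
        module
      rw [hrw]
      have hb1 : ‖(c' - c) • g₀‖ < ε/2 := by
        rw [norm_smul, Real.norm_eq_abs]
        have h1 : |c' - c| < ε/(2*(‖g₀‖+1)) := by rwa [abs_sub_comm]
        have h2 : |c' - c| * ‖g₀‖ ≤ |c' - c| * (‖g₀‖+1) := by
          nlinarith [abs_nonneg (c' - c)]
        have h3 : |c' - c| * (‖g₀‖+1) < (ε/(2*(‖g₀‖+1))) * (‖g₀‖+1) := by
          have : (0:ℝ) < ‖g₀‖+1 := by positivity
          exact (mul_lt_mul_iff_left₀ this).mpr h1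
        have h4 : (ε/(2*(‖g₀‖+1))) * (‖g₀‖+1) = ε/2 := by
          field_simp
        linarith
      have hb2 : ‖(Dd g₀ t - Dd g₀ γ) • h₀‖ < ε/2 := by
        rw [norm_smul, Real.norm_eq_abs]
        have h2 : |Dd g₀ t - Dd g₀ γ| * ‖h₀‖ ≤ |Dd g₀ t - Dd g₀ γ| * (‖h₀‖+1) := by
          nlinarith [abs_nonneg (Dd g₀ t - Dd g₀ γ), norm_nonneg h₀]
        have h3 : |Dd g₀ t - Dd g₀ γ| * (‖h₀‖+1) < (ε/(2*(‖h₀‖+1))) * (‖h₀‖+1) := by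
          have : (0:ℝ) < ‖h₀‖+1 := by positivity
          exact (mul_lt_mul_iff_left₀ this).mpr hy
        have h4 : (ε/(2*(‖h₀‖+1))) * (‖h₀‖+1) = ε/2 := by
          field_simp
        linarith
      calc ‖(c' - c) • g₀ - (Dd g₀ t - Dd g₀ γ) • h₀‖
          ≤ ‖(c' - c) • g₀‖ + ‖(Dd g₀ t - Dd g₀ γ) • h₀‖ := norm_sub_le _ _
        _ < ε/2 + ε/2 := add_lt_add hb1 hb2
        _ = ε := by ring
    · -- F cyclic : contradiction with irrationality
      exfalso
      have huF : Dd g₀ uu ∈ F := ⟨uu, uu_mem, rfl⟩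
      have hvF : Dd g₀ vv ∈ F := ⟨vv, vv_mem, rfl⟩
      have hwF : Dd g₀ ww ∈ F := ⟨ww, ww_mem, rfl⟩
      rw [hFa, AddSubgroup.mem_closure_singleton] at huF hvF hwF
      obtain ⟨k₁, hk₁⟩ := huF
      obtain ⟨k₂, hk₂⟩ := hvF
      obtain ⟨k₃, hk₃⟩ := hwF
      rw [zsmul_eq_mul] at hk₁ hk₂ hk₃
      by_cases ha0 : a = 0
      · subst ha0
        simp only [mul_zero] at hk₁ hk₃
        have hcr := cramer uu ww g₀
        have h1 : Dd g₀ ww = 0 := hk₃.symm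
        have h2 : Dd uu g₀ = 0 := by rw [Dd_swap, ← hk₁]; ring
        rw [h1, h2] at hcr
        simp only [zero_smul, add_zero] at hcr
        rcases smul_eq_zero.mp hcr with h | h
        · exact Duw_ne h
        · exact hg₀ne h
      · have hDu : Dd g₀ uu = g₀.re - g₀.im := by simp [Dd]
        have hDv : Dd g₀ vv = g₀.re * Real.sqrt 2 - g₀.im * Real.sqrt 3 := by simp [Dd]
        have hDw : Dd g₀ ww = g₀.re - g₀.im * Real.sqrt 2 := by simp [Dd]
        have h1 : (-g₀.im/a) + (g₀.re/a) = (k₁:ℝ) := by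
          rw [← add_div, div_eq_iff ha0]
          rw [hDu] at hk₁
          linarith
        have h2 : (-g₀.im/a) * Real.sqrt 3 + (g₀.re/a) * Real.sqrt 2 = (k₂:ℝ) := by
          rw [div_mul_eq_mul_div, div_mul_eq_mul_div, ← add_div, div_eq_iff ha0]
          rw [hDv] at hk₂
          linarith
        have h3 : (-g₀.im/a) * Real.sqrt 2 + (g₀.re/a) = (k₃:ℝ) := by
          rw [div_mul_eq_mul_div, ← add_div, div_eq_iff ha0]
          rw [hDw] at hk₃
          linarith
        obtain ⟨hl0, hμ0⟩ := key_alg h1 h2 h3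
        have him : g₀.im = 0 := by
          field_simp at hl0
          linarith
        have hre : g₀.re = 0 := by
          field_simp at hμ0
          linarith
        exact hg₀ne (Complex.ext hre him)

lemma gamma_dense' (t : ℂ) {ε : ℝ} (hε : 0 < ε) :
    ∃ n m p : ℤ, ‖((n:ℂ) * (1 + Complex.I) +
      (m:ℂ) * ((Real.sqrt 3 : ℂ) + Complex.I * (Real.sqrt 2 : ℂ)) +
      (p:ℂ) * ((Real.sqrt 2 : ℂ) + Complex.I)) - t‖ < ε := by
  obtain ⟨γ, ⟨n, m, p, rfl⟩, h⟩ := gamma_dense t hε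
  exact ⟨n, m, p, by simpa [uu, vv, ww] using h⟩

end

/-- For `z = (1+i, √3+i√2, √2+i, z₄, z₅)`, the orbit
`G(z) = {(1+i, √3+i√2, √2+i, z₄, n(1+i) + m(√3+i√2) + p(√2+i) + z₅) : n, m, p ∈ ℤ}`
is dense in the complex straight line `{(1+i, √3+i√2, √2+i, z₄, w) : w ∈ ℂ}`. -/
theorem orbit_dense_in_complex_line (z₄ z₅ : ℂ) :
    {w : Fin 5 → ℂ | ∃ M ∈ Gex, (M : Matrix (Fin 5) (Fin 5) ℂ).mulVec
        ![1 + Complex.I, (Real.sqrt 3 : ℂ) + Complex.I * (Real.sqrt 2 : ℂ),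
          (Real.sqrt 2 : ℂ) + Complex.I, z₄, z₅] = w} =
      {w : Fin 5 → ℂ | ∃ n m p : ℤ,
        w = ![1 + Complex.I, (Real.sqrt 3 : ℂ) + Complex.I * (Real.sqrt 2 : ℂ),
          (Real.sqrt 2 : ℂ) + Complex.I, z₄,
          (n : ℂ) * (1 + Complex.I) +
            (m : ℂ) * ((Real.sqrt 3 : ℂ) + Complex.I * (Real.sqrt 2 : ℂ)) +
            (p : ℂ) * ((Real.sqrt 2 : ℂ) + Complex.I) + z₅]} ∧
    closure {w : Fin 5 → ℂ | ∃ M ∈ Gex, (M : Matrix (Fin 5) (Fin 5) ℂ).mulVec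
        ![1 + Complex.I, (Real.sqrt 3 : ℂ) + Complex.I * (Real.sqrt 2 : ℂ),
          (Real.sqrt 2 : ℂ) + Complex.I, z₄, z₅] = w} =
      {w : Fin 5 → ℂ | ∃ c : ℂ,
        w = ![1 + Complex.I, (Real.sqrt 3 : ℂ) + Complex.I * (Real.sqrt 2 : ℂ),
          (Real.sqrt 2 : ℂ) + Complex.I, z₄, c]} := by
  set a₀ : ℂ := 1 + Complex.I with ha₀
  set a₁ : ℂ := (Real.sqrt 3 : ℂ) + Complex.I * (Real.sqrt 2 : ℂ) with ha₁
  set a₂ : ℂ := (Real.sqrt 2 : ℂ) + Complex.I with ha₂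
  have horb : {w : Fin 5 → ℂ | ∃ M ∈ Gex, (M : Matrix (Fin 5) (Fin 5) ℂ).mulVec
        ![a₀, a₁, a₂, z₄, z₅] = w} =
      {w : Fin 5 → ℂ | ∃ n m p : ℤ,
        w = ![a₀, a₁, a₂, z₄, (n : ℂ) * a₀ + (m : ℂ) * a₁ + (p : ℂ) * a₂ + z₅]} := by
    ext w
    simp only [Set.mem_setOf_eq]
    constructor
    · rintro ⟨M, hM, rfl⟩
      obtain ⟨n, m, p, rfl⟩ := mem_Gex_iff.mp hM
      exact ⟨n, m, p, (gE_mulVec n m p a₀ a₁ a₂ z₄ z₅).symm ▸ rfl⟩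
    · rintro ⟨n, m, p, rfl⟩
      exact ⟨gE n m p, gE_mem n m p, gE_mulVec n m p a₀ a₁ a₂ z₄ z₅⟩
  refine ⟨horb, ?_⟩
  rw [horb]
  -- the line as an intersection of closed coordinate conditions
  have hline : {w : Fin 5 → ℂ | ∃ c : ℂ, w = ![a₀, a₁, a₂, z₄, c]} =
      {w : Fin 5 → ℂ | w 0 = a₀ ∧ w 1 = a₁ ∧ w 2 = a₂ ∧ w 3 = z₄} := by
    ext w
    simp only [Set.mem_setOf_eq]
    constructor
    · rintro ⟨c, rfl⟩
      refine ⟨rfl, rfl, rfl, rfl⟩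
    · rintro ⟨h0, h1, h2, h3⟩
      refine ⟨w 4, ?_⟩
      funext i
      fin_cases i <;> simp_all
  apply Set.Subset.antisymm
  · apply closure_minimal
    · rintro w ⟨n, m, p, rfl⟩
      exact ⟨(n : ℂ) * a₀ + (m : ℂ) * a₁ + (p : ℂ) * a₂ + z₅, rfl⟩
    · rw [hline]
      simp only [Set.setOf_and]
      refine IsClosed.inter (isClosed_eq (continuous_apply 0) continuous_const)
        (IsClosed.inter (isClosed_eq (continuous_apply 1) continuous_const)
          (IsClosed.inter (isClosed_eq (continuous_apply 2) continuous_const)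
            (isClosed_eq (continuous_apply 3) continuous_const)))
  · rintro w ⟨c, rfl⟩
    rw [Metric.mem_closure_iff]
    intro ε hε
    obtain ⟨n, m, p, hnmp⟩ := gamma_dense' (c - z₅) hε
    rw [← ha₀, ← ha₁, ← ha₂] at hnmp
    refine ⟨![a₀, a₁, a₂, z₄, (n : ℂ) * a₀ + (m : ℂ) * a₁ + (p : ℂ) * a₂ + z₅],
      ⟨n, m, p, rfl⟩, ?_⟩
    rw [dist_pi_lt_iff hε]
    intro i
    fin_cases i
    · show dist a₀ a₀ < ε
      simpa using hε
    · show dist a₁ a₁ < ε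
      simpa using hε
    · show dist a₂ a₂ < ε
      simpa using hε
    · show dist z₄ z₄ < ε
      simpa using hε
    · show dist c ((n : ℂ) * a₀ + (m : ℂ) * a₁ + (p : ℂ) * a₂ + z₅) < ε
      rw [Complex.dist_eq,
        show c - ((n : ℂ) * a₀ + (m : ℂ) * a₁ + (p : ℂ) * a₂ + z₅)
          = -(((n : ℂ) * a₀ + (m : ℂ) * a₁ + (p : ℂ) * a₂) - (c - z₅)) by ring,
        norm_neg]
      exact hnmp
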